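/- Let m, k be integers with m ≥ 5 and 2 ≤ k ≤ ⌊(m-1)/2⌋, and let ḡ_{(m,k)} be the associated function on 𝔽_3^m. Then every nonzero codeword of the code C_{ḡ_{(m,k)}} has Hamming weight at least 3^m - 3^{m-1} - 2^k·C(m-1, k), and this weight is attained by the codewords c_{u,v} with u ≠ 0 and wt(v) = 1; that is, the minimum distance of C_{ḡ_{(m,k)}} equals 3^m - 3^{m-1} - 2^k·C(m-1, k). -/

import Mathlib

open Finset

/-- The function `ḡ_{(m,k)} : 𝔽_3^m → 𝔽_3`: `1` if `wt(x) > k`, `0` if `wt(x) ≤ k`. -/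
def gbar {m : ℕ} (k : ℕ) (x : Fin m → ZMod 3) : ZMod 3 :=
  if k < hammingNorm x then 1 else 0

/-- The Hamming weight of the codeword `c_{u,v}` of the code `C_h`, i.e. the number
of `x ∈ 𝔽_3^m \ {0}` with `u·h(x) + v·x ≠ 0`. -/
def cwWeight {m : ℕ} (h : (Fin m → ZMod 3) → ZMod 3)
    (u : ZMod 3) (v : Fin m → ZMod 3) : ℕ :=
  (Finset.univ.filter fun x : Fin m → ZMod 3 =>
    x ≠ 0 ∧ u * h x + ∑ j, v j * x j ≠ 0).card

namespace S16

abbrev V (n : ℕ) := Fin n → ZMod 3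

def lin {n : ℕ} (v x : V n) : ZMod 3 := ∑ i, v i * x i

def Nt {n : ℕ} (v : V n) (t : ZMod 3) (k : ℕ) : ℕ :=
  (univ.filter fun x : V n => lin v x = t ∧ hammingNorm x ≤ k).card

def Ball (n k : ℕ) : ℕ := (univ.filter fun x : V n => hammingNorm x ≤ k).card

def Sph (n k : ℕ) : ℕ := (univ.filter fun x : V n => hammingNorm x = k).card

def Fb {n : ℕ} (v : V n) (t : ZMod 3) : ℕ := (univ.filter fun x : V n => lin v x = t).card

def Dv {n : ℕ} (v : V n) (c : ZMod 3) (k : ℕ) : ℤ := (Nt v 0 k : ℤ) - Nt v c k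

lemma hammingNorm_eq_sum {n : ℕ} (x : V n) :
    hammingNorm x = ∑ i, if x i ≠ 0 then 1 else 0 := by
  rw [hammingNorm, Finset.card_filter]

lemma hammingNorm_cons {n : ℕ} (a : ZMod 3) (y : V n) :
    hammingNorm (Fin.cons a y : V (n+1)) = (if a ≠ 0 then 1 else 0) + hammingNorm y := by
  simp_rw [hammingNorm_eq_sum, Fin.sum_univ_succ, Fin.cons_zero, Fin.cons_succ]

lemma lin_cons {n : ℕ} (v : V (n+1)) (a : ZMod 3) (y : V n) :
    lin v (Fin.cons a y) = v 0 * a + lin (Fin.tail v) y := by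
  simp_rw [lin, Fin.sum_univ_succ, Fin.cons_zero, Fin.cons_succ]
  rfl

lemma card_filter_succ {n : ℕ} (P : V (n+1) → Prop) [DecidablePred P] :
    (univ.filter P).card = ∑ a : ZMod 3, (univ.filter fun y : V n => P (Fin.cons a y)).card := by
  rw [Finset.card_eq_sum_card_fiberwise (f := fun x : V (n+1) => x 0) (t := univ)
    (fun x _ => mem_univ _)]
  refine Finset.sum_congr rfl fun a _ => ?_
  refine Finset.card_bij' (fun x _ => Fin.tail x) (fun y _ => Fin.cons a y) ?_ ?_ ?_ ?_
  · intro x hx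
    simp only [mem_filter, mem_univ, true_and] at hx ⊢
    obtain ⟨h1, h2⟩ := hx
    rwa [← h2, Fin.cons_self_tail]
  · intro y hy
    simp only [mem_filter, mem_univ, true_and] at hy ⊢
    exact ⟨hy, Fin.cons_zero _ _⟩
  · intro x hx
    simp only [mem_filter, mem_univ, true_and] at hx
    rw [← hx.2, Fin.cons_self_tail]
  · intro y hy
    exact Fin.tail_cons (α := fun _ => ZMod 3) a y


lemma zmod3_sum (f : ZMod 3 → ℕ) : ∑ a : ZMod 3, f a = f 0 + f 1 + f 2 :=
  Fin.sum_univ_three f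

lemma pair_sum (v0 c : ZMod 3) (h : v0 ≠ 0) (f : ZMod 3 → ℤ) :
    f (c - v0*1) + f (c - v0*2) = f 0 + f 1 + f 2 - f c := by
  have hz : ∀ a : ZMod 3, a = 0 ∨ a = 1 ∨ a = 2 := by decide
  rcases hz v0 with rfl | rfl | rfl <;> rcases hz c with rfl | rfl | rfl <;> simp_all <;>
    reduce_mod_char <;> ring


lemma hammingNorm_perm {n : ℕ} (x : V n) (σ : Equiv.Perm (Fin n)) :
    hammingNorm (fun i => x (σ i)) = hammingNorm x := by
  rw [hammingNorm_eq_sum, hammingNorm_eq_sum]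
  exact Equiv.sum_comp σ (fun i => if x i ≠ 0 then 1 else 0)

lemma lin_perm {n : ℕ} (v x : V n) (σ : Equiv.Perm (Fin n)) :
    lin (v ∘ σ) x = lin v (fun i => x (σ.symm i)) := by
  rw [lin, lin, ← Equiv.sum_comp σ (fun i => v i * x (σ.symm i))]
  simp [Function.comp]

lemma card_perm {n : ℕ} (σ : Equiv.Perm (Fin n)) (v : V n) (Q : ZMod 3 → ℕ → Prop)
    [∀ t w, Decidable (Q t w)] :
    (univ.filter fun x : V n => Q (lin (v ∘ σ) x) (hammingNorm x)).card
      = (univ.filter fun x : V n => Q (lin v x) (hammingNorm x)).card := by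
  refine Finset.card_bij' (fun x _ => fun i => x (σ.symm i)) (fun x _ => fun i => x (σ i))
    ?_ ?_ ?_ ?_
  · intro x hx
    simp only [mem_filter, mem_univ, true_and] at hx ⊢
    rwa [← lin_perm v x σ, hammingNorm_perm x σ.symm]
  · intro x hx
    simp only [mem_filter, mem_univ, true_and] at hx ⊢
    rw [lin_perm v _ σ, hammingNorm_perm x σ]
    simpa using hx
  · intro x _; ext i; simp
  · intro x _; ext i; simp

lemma cardeq {α : Type} [Fintype α] (p q : α → Prop) [DecidablePred p] [DecidablePred q]
    (h : ∀ x, p x ↔ q x) : (univ.filter p).card = (univ.filter q).card := by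
  congr 1
  exact Finset.filter_congr fun x _ => h x

lemma lin_zero_x {n : ℕ} (v : V n) : lin v 0 = 0 := by simp [lin]

lemma lin_zero_v {n : ℕ} (x : V n) : lin 0 x = 0 := by simp [lin]

lemma Nt_zero_k {n : ℕ} (v : V n) (t : ZMod 3) :
    Nt v t 0 = if t = 0 then 1 else 0 := by
  rcases eq_or_ne t 0 with rfl | ht
  · rw [Nt, if_pos rfl]
    rw [show (univ.filter fun x : V n => lin v x = 0 ∧ hammingNorm x ≤ 0) = {0} from ?_]
    · exact Finset.card_singleton 0
    · ext x
      simp only [mem_filter, mem_univ, true_and, mem_singleton, Nat.le_zero,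
        hammingNorm_eq_zero]
      constructor
      · exact fun h => h.2
      · rintro rfl; exact ⟨lin_zero_x v, rfl⟩
  · rw [Nt, if_neg ht]
    rw [Finset.card_eq_zero, Finset.filter_eq_empty_iff]
    intro x _
    rintro ⟨h1, h2⟩
    rw [Nat.le_zero, hammingNorm_eq_zero] at h2
    subst h2
    rw [lin_zero_x] at h1
    exact ht h1.symm

lemma Nt_zero_v {n : ℕ} (t : ZMod 3) (k : ℕ) :
    Nt (0 : V n) t k = if t = 0 then Ball n k else 0 := by
  rcases eq_or_ne t 0 with rfl | ht
  · rw [if_pos rfl, Nt, Ball]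
    exact cardeq _ _ fun x => by simp [lin_zero_v]
  · rw [if_neg ht, Nt, Finset.card_eq_zero, Finset.filter_eq_empty_iff]
    intro x _
    rintro ⟨h1, -⟩
    rw [lin_zero_v] at h1
    exact ht h1.symm

lemma Ball_zero {n : ℕ} : Ball n 0 = 1 := by
  have := Nt_zero_k (0 : V n) 0
  rw [Nt_zero_v] at this
  simpa using this

lemma Ball_succ_k {n k : ℕ} : Ball n (k+1) = Ball n k + Sph n (k+1) := by
  rw [Ball, Ball, Sph, ← Finset.card_union_of_disjoint]
  · congr 1
    rw [← Finset.filter_or]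
    exact Finset.filter_congr fun x _ => by omega
  · rw [Finset.disjoint_filter]
    intro x _ h1 h2
    omega

lemma Sph_zero {n : ℕ} : Sph n 0 = 1 := by
  rw [Sph, show (univ.filter fun x : V n => hammingNorm x = 0) = {0} from ?_]
  · exact Finset.card_singleton 0
  · ext x
    simp [hammingNorm_eq_zero]

lemma Sph_succ {n k : ℕ} : Sph (n+1) (k+1) = Sph n (k+1) + 2 * Sph n k := by
  rw [Sph, card_filter_succ, zmod3_sum]
  have h0 : (univ.filter fun y : V n =>
      hammingNorm (Fin.cons (0:ZMod 3) y : V (n+1)) = k+1).card = Sph n (k+1) :=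
    cardeq _ _ fun y => by rw [hammingNorm_cons]; simp
  have h1 : ∀ a : ZMod 3, a ≠ 0 → (univ.filter fun y : V n =>
      hammingNorm (Fin.cons a y : V (n+1)) = k+1).card = Sph n k := fun a ha =>
    cardeq _ _ fun y => by rw [hammingNorm_cons]; simp [ha]; omega
  rw [h0, h1 1 (by decide), h1 2 (by decide)]
  ring

lemma Ball_succ_n {n k : ℕ} : Ball (n+1) (k+1) = Ball n (k+1) + 2 * Ball n k := by
  rw [Ball, card_filter_succ, zmod3_sum]
  have h0 : (univ.filter fun y : V n =>
      hammingNorm (Fin.cons (0:ZMod 3) y : V (n+1)) ≤ k+1).card = Ball n (k+1) :=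
    cardeq _ _ fun y => by rw [hammingNorm_cons]; simp
  have h1 : ∀ a : ZMod 3, a ≠ 0 → (univ.filter fun y : V n =>
      hammingNorm (Fin.cons a y : V (n+1)) ≤ k+1).card = Ball n k := fun a ha =>
    cardeq _ _ fun y => by rw [hammingNorm_cons]; simp [ha]; omega
  rw [h0, h1 1 (by decide), h1 2 (by decide)]
  ring

lemma Sph_formula {n : ℕ} : ∀ k, Sph n k = 2^k * n.choose k := by
  induction n with
  | zero =>
    intro k
    cases k with
    | zero => simp [Sph_zero]
    | succ k =>
      rw [Nat.choose_eq_zero_of_lt (by omega), mul_zero, Sph, Finset.card_eq_zero,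
        Finset.filter_eq_empty_iff]
      intro x _
      have := hammingNorm_le_card_fintype (x := x)
      simp only [Fintype.card_fin] at this
      omega
  | succ n ih =>
    intro k
    cases k with
    | zero => simp [Sph_zero]
    | succ k =>
      rw [Sph_succ, ih, ih, Nat.choose_succ_succ (n := n) (k := k)]
      ring

lemma Nt_succ {n : ℕ} (v : V (n+1)) (t : ZMod 3) (k : ℕ) :
    Nt v t (k+1) = Nt (Fin.tail v) t (k+1) + Nt (Fin.tail v) (t - v 0 * 1) k
      + Nt (Fin.tail v) (t - v 0 * 2) k := by
  have key : ∀ (c s t : ZMod 3), (c + s = t ↔ s = t - c) := by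
    intro c s t
    constructor
    · intro h; rw [← h]; ring
    · intro h; rw [h]; ring
  rw [Nt, card_filter_succ, zmod3_sum]
  have h0 : (univ.filter fun y : V n => lin v (Fin.cons (0:ZMod 3) y) = t ∧
      hammingNorm (Fin.cons (0:ZMod 3) y : V (n+1)) ≤ k+1).card = Nt (Fin.tail v) t (k+1) :=
    cardeq _ _ fun y => by rw [hammingNorm_cons, lin_cons]; simp
  have h1 : ∀ a : ZMod 3, a ≠ 0 → (univ.filter fun y : V n => lin v (Fin.cons a y) = t ∧
      hammingNorm (Fin.cons a y : V (n+1)) ≤ k+1).card = Nt (Fin.tail v) (t - v 0 * a) k :=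
    fun a ha => cardeq _ _ fun y => by
      rw [hammingNorm_cons, lin_cons, key]
      simp [ha]
      omega
  rw [h0, h1 1 (by decide), h1 2 (by decide)]

lemma Dv_succ {n : ℕ} (v : V (n+1)) (hv0 : v 0 ≠ 0) {c : ZMod 3} (hc : c ≠ 0) (k : ℕ) :
    Dv v c (k+1) = Dv (Fin.tail v) c (k+1) - Dv (Fin.tail v) c k := by
  have e0 := Nt_succ v 0 k
  have ec := Nt_succ v c k
  have p0 := pair_sum (v 0) 0 hv0 (fun s => (Nt (Fin.tail v) s k : ℤ))
  have pc := pair_sum (v 0) c hv0 (fun s => (Nt (Fin.tail v) s k : ℤ))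
  unfold Dv
  rw [e0, ec]
  push_cast
  linarith [p0, pc]

lemma Nt_perm {n : ℕ} (σ : Equiv.Perm (Fin n)) (v : V n) (t : ZMod 3) (k : ℕ) :
    Nt (v ∘ σ) t k = Nt v t k :=
  card_perm σ v (fun a b => a = t ∧ b ≤ k)

lemma Fb_perm {n : ℕ} (σ : Equiv.Perm (Fin n)) (v : V n) (t : ZMod 3) :
    Fb (v ∘ σ) t = Fb v t :=
  card_perm σ v (fun a _ => a = t)

lemma Dv_zero_k {n : ℕ} (v : V n) {c : ZMod 3} (hc : c ≠ 0) : Dv v c 0 = 1 := by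
  unfold Dv
  rw [Nt_zero_k, Nt_zero_k, if_pos rfl, if_neg hc]
  simp

lemma Dv_tail_zero {n : ℕ} (v : V (n+1)) (hv0 : v 0 ≠ 0) (htail : Fin.tail v = 0)
    {c : ZMod 3} (hc : c ≠ 0) (k : ℕ) : Dv v c k = Sph n k := by
  cases k with
  | zero => rw [Dv_zero_k v hc, Sph_zero]; norm_num
  | succ k =>
    rw [Dv_succ v hv0 hc k]
    unfold Dv
    rw [htail, Nt_zero_v, Nt_zero_v, Nt_zero_v, Nt_zero_v, if_pos rfl, if_pos rfl,
      if_neg hc, if_neg hc, Ball_succ_k (n := n) (k := k)]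
    push_cast
    ring

lemma Dv_bound {n : ℕ} : ∀ (v : V (n+1)), v ≠ 0 → ∀ c : ZMod 3, c ≠ 0 → ∀ k,
    |Dv v c k| ≤ (Sph n k : ℤ) := by
  induction n with
  | zero =>
    intro v hv c hc k
    have hv0 : v 0 ≠ 0 := by
      intro h0
      exact hv (funext fun i => by rw [show i = 0 from Fin.ext (by omega)]; exact h0)
    rw [Dv_tail_zero v hv0 (funext fun i => i.elim0) hc k, abs_of_nonneg (by positivity)]
  | succ n ih =>
    intro v hv c hc k
    obtain ⟨j, hj⟩ := Function.ne_iff.mp hv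
    have hj' : v j ≠ 0 := hj
    set σ := Equiv.swap (0 : Fin (n+2)) j with hσ
    have hw0 : (v ∘ σ) 0 ≠ 0 := by
      simpa [hσ, Function.comp, Equiv.swap_apply_left] using hj'
    have hDv : ∀ k', Dv (v ∘ σ) c k' = Dv v c k' := fun k' => by
      unfold Dv; rw [Nt_perm, Nt_perm]
    rw [← hDv k]
    cases k with
    | zero =>
      rw [Dv_zero_k _ hc, Sph_zero]
      norm_num
    | succ k =>
      rcases eq_or_ne (Fin.tail (v ∘ σ)) 0 with h0 | h0
      · rw [Dv_tail_zero _ hw0 h0 hc, abs_of_nonneg (by positivity)]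
      · rw [Dv_succ _ hw0 hc]
        have b1 := ih (Fin.tail (v ∘ σ)) h0 c hc (k+1)
        have b2 := ih (Fin.tail (v ∘ σ)) h0 c hc k
        have habs := abs_sub (Dv (Fin.tail (v ∘ σ)) c (k+1)) (Dv (Fin.tail (v ∘ σ)) c k)
        have hS : (Sph (n+1) (k+1) : ℤ) = Sph n (k+1) + 2 * Sph n k := by
          rw [Sph_succ]; push_cast; ring
        have : (0:ℤ) ≤ Sph n k := by positivity
        linarith

lemma Dv_wt_one {n : ℕ} (v : V (n+1)) (hw : hammingNorm v = 1) {c : ZMod 3} (hc : c ≠ 0)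
    (k : ℕ) : Dv v c k = Sph n k := by
  have hv : v ≠ 0 := by
    intro h; rw [h, hammingNorm_zero] at hw; omega
  obtain ⟨j, hj⟩ := Function.ne_iff.mp hv
  have hj' : v j ≠ 0 := hj
  set σ := Equiv.swap (0 : Fin (n+1)) j with hσ
  have hw0 : (v ∘ σ) 0 ≠ 0 := by
    simpa [hσ, Function.comp, Equiv.swap_apply_left] using hj'
  have hwt : hammingNorm (v ∘ σ) = 1 := by
    rw [show v ∘ σ = fun i => v (σ i) from rfl, hammingNorm_perm v σ, hw]
  have hDv : ∀ k', Dv (v ∘ σ) c k' = Dv v c k' := fun k' => by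
    unfold Dv; rw [Nt_perm, Nt_perm]
  rw [← hDv k]
  have hcons := hammingNorm_cons ((v ∘ σ) 0) (Fin.tail (v ∘ σ))
  rw [Fin.cons_self_tail] at hcons
  rw [hwt, if_pos hw0] at hcons
  have htail : Fin.tail (v ∘ σ) = 0 := by
    rw [← hammingNorm_eq_zero]
    omega
  exact Dv_tail_zero _ hw0 htail hc k

lemma card_V (n : ℕ) : Fintype.card (V n) = 3^n := by
  rw [Fintype.card_fun, ZMod.card, Fintype.card_fin]

lemma Fb_eq0 {n : ℕ} (w : V (n+1)) (hw0 : w 0 ≠ 0) (t : ZMod 3) : Fb w t = 3^n := by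
  rw [Fb, ← card_V n, ← Finset.card_univ]
  refine Finset.card_bij' (fun x _ => Fin.tail x)
    (fun y _ => Fin.cons ((w 0)⁻¹ * (t - lin (Fin.tail w) y)) y) (fun _ _ => mem_univ _)
    ?_ ?_ ?_
  · intro y _
    simp only [mem_filter, mem_univ, true_and]
    rw [lin_cons, ← mul_assoc, mul_inv_cancel₀ hw0, one_mul]
    ring
  · intro x hx
    simp only [mem_filter, mem_univ, true_and] at hx
    have hdecomp : lin w x = w 0 * x 0 + lin (Fin.tail w) (Fin.tail x) := by
      conv_lhs => rw [← Fin.cons_self_tail x]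
      rw [lin_cons]
    have hx0 : (w 0)⁻¹ * (t - lin (Fin.tail w) (Fin.tail x)) = x 0 := by
      rw [← hx, hdecomp]
      field_simp
      ring
    rw [hx0, Fin.cons_self_tail]
  · intro y _
    exact Fin.tail_cons (α := fun _ => ZMod 3) _ y

lemma Fb_eq {n : ℕ} (v : V (n+1)) (hv : v ≠ 0) (t : ZMod 3) : Fb v t = 3^n := by
  obtain ⟨j, hj⟩ := Function.ne_iff.mp hv
  have hj' : v j ≠ 0 := hj
  set σ := Equiv.swap (0 : Fin (n+1)) j with hσ
  have hw0 : (v ∘ σ) 0 ≠ 0 := by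
    simpa [hσ, Function.comp, Equiv.swap_apply_left] using hj'
  rw [← Fb_perm σ v t, Fb_eq0 _ hw0]

lemma Ball_le {n k : ℕ} (h : 2*k < n) : 3 * Ball n k ≤ 3^n := by
  classical
  set s : Finset (ZMod 3 × V n) :=
    (univ : Finset (ZMod 3)) ×ˢ (univ.filter fun x : V n => hammingNorm x ≤ k) with hs
  have hcard : s.card = 3 * Ball n k := by
    rw [hs, Finset.card_product]
    congr 1
  have hinj : Set.InjOn (fun p : ZMod 3 × V n => (fun i => p.2 i + p.1 : V n)) ↑s := by
    rintro ⟨a, x⟩ hax ⟨b, y⟩ hby heq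
    simp only [hs, coe_product, Set.mem_prod, mem_coe, mem_filter, mem_univ, true_and] at hax hby
    rcases eq_or_ne a b with rfl | hab
    · have : x = y := funext fun i => by
        have := congr_fun heq i
        simpa using this
      rw [this]
    · exfalso
      have hne : ∀ i, x i ≠ y i := by
        intro i hxy
        have := congr_fun heq i
        simp only at this
        rw [hxy, add_right_inj] at this
        exact hab this
      have hd : hammingDist x y = n := by
        rw [hammingDist, Finset.filter_true_of_mem (fun i _ => hne i), card_univ,
          Fintype.card_fin]
      have htri : hammingDist x y ≤ hammingNorm x + hammingNorm y := by
        simpa [hammingDist_zero_right] using hammingDist_triangle_right x y 0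
      omega
  have := Finset.card_le_card_of_injOn _ (fun p _ => mem_univ _) hinj
  rw [hcard, card_univ, card_V] at this
  exact this

def Zc (m k : ℕ) (u : ZMod 3) (v : V m) : ℕ :=
  (univ.filter fun x : V m => u * gbar k x + ∑ j, v j * x j = 0).card

lemma split_card {α : Type} [Fintype α] (P Q : α → Prop) [DecidablePred P] [DecidablePred Q] :
    (univ.filter P).card = (univ.filter fun x => P x ∧ Q x).card
      + (univ.filter fun x => P x ∧ ¬ Q x).card := by
  rw [← Finset.filter_filter, ← Finset.filter_filter,
    Finset.card_filter_add_card_filter_not]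

lemma cwWeight_add_Z (m k : ℕ) (u : ZMod 3) (v : V m) :
    cwWeight (gbar (m := m) k) u v + Zc m k u v = 3^m := by
  rw [cwWeight, Zc]
  have h1 : (univ.filter fun x : V m => x ≠ 0 ∧ u * gbar k x + ∑ j, v j * x j ≠ 0).card
      = (univ.filter fun x : V m => ¬(u * gbar k x + ∑ j, v j * x j = 0)).card :=
    cardeq _ _ fun x => by
      constructor
      · exact fun h => h.2
      · intro h
        refine ⟨?_, h⟩
        rintro rfl
        exact h (by simp [gbar])
  rw [h1, add_comm, Finset.card_filter_add_card_filter_not, card_univ, card_V]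

lemma Z_u0 (m k : ℕ) (v : V m) : Zc m k 0 v = Fb v 0 := by
  rw [Zc, Fb]
  exact cardeq _ _ fun x => by simp [lin]

lemma Z_v0 (m k : ℕ) {u : ZMod 3} (hu : u ≠ 0) : Zc m k u 0 = Ball m k := by
  rw [Zc, Ball]
  refine cardeq _ _ fun x => ?_
  rcases le_or_gt (hammingNorm x) k with h | h
  · simp [gbar, Nat.not_lt.mpr h, h]
  · simp [gbar, h, Nat.not_le.mpr h, hu]

lemma Z_main (m k : ℕ) {u : ZMod 3} (hu : u ≠ 0) (v : V m) :
    Zc m k u v + Nt v (-u) k = Nt v 0 k + Fb v (-u) := by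
  have hsplit := split_card (α := V m)
    (fun x => u * gbar k x + ∑ j, v j * x j = 0) (fun x => hammingNorm x ≤ k)
  have e1 : (univ.filter fun x : V m =>
      (u * gbar k x + ∑ j, v j * x j = 0) ∧ hammingNorm x ≤ k).card = Nt v 0 k := by
    refine cardeq _ _ fun x => ?_
    rcases le_or_gt (hammingNorm x) k with h | h
    · simp [gbar, Nat.not_lt.mpr h, h, lin]
    · simp [Nat.not_le.mpr h]
  have e2 : (univ.filter fun x : V m =>
      (u * gbar k x + ∑ j, v j * x j = 0) ∧ ¬ hammingNorm x ≤ k).card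
      = (univ.filter fun x : V m => lin v x = -u ∧ ¬ hammingNorm x ≤ k).card := by
    refine cardeq _ _ fun x => ?_
    rcases le_or_gt (hammingNorm x) k with h | h
    · simp [h]
    · have hg : gbar (m := m) k x = 1 := by simp [gbar, h]
      rw [hg]
      constructor
      · rintro ⟨hh, h2⟩
        exact ⟨by simp only [lin]; linear_combination hh, h2⟩
      · rintro ⟨hh, h2⟩
        exact ⟨by simp only [lin] at hh; linear_combination hh, h2⟩
  have e3 : Fb v (-u) = Nt v (-u) k + (univ.filter fun x : V m =>
      lin v x = -u ∧ ¬ hammingNorm x ≤ k).card := by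
    rw [Fb, Nt]
    exact split_card _ _
  rw [Zc, hsplit, e1, e2, e3]
  ring

end S16

open S16 in
/-- For `m ≥ 5` and `2 ≤ k ≤ ⌊(m-1)/2⌋`, every nonzero codeword of
`C_{ḡ_{(m,k)}}` has Hamming weight at least `3^m - 3^{m-1} - 2^k·C(m-1,k)`, and this
weight is attained by the codewords `c_{u,v}` with `u ≠ 0` and `wt(v) = 1`: the
minimum distance of `C_{ḡ_{(m,k)}}` equals `3^m - 3^{m-1} - 2^k·C(m-1,k)`. -/
theorem stmt_16 (m k : ℕ) (hm : 5 ≤ m) (hk2 : 2 ≤ k) (hk : k ≤ (m - 1) / 2) :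
    (∀ (u : ZMod 3) (v : Fin m → ZMod 3),
      (∃ x : Fin m → ZMod 3, x ≠ 0 ∧ u * gbar k x + ∑ j, v j * x j ≠ 0) →
      (3 : ℤ) ^ m - 3 ^ (m - 1) - 2 ^ k * ((m - 1).choose k : ℤ)
        ≤ (cwWeight (gbar (m := m) k) u v : ℤ))
    ∧ (∀ (u : ZMod 3) (v : Fin m → ZMod 3), u ≠ 0 → hammingNorm v = 1 →
      (cwWeight (gbar (m := m) k) u v : ℤ)
        = (3 : ℤ) ^ m - 3 ^ (m - 1) - 2 ^ k * ((m - 1).choose k : ℤ)) := by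
  obtain ⟨n, rfl⟩ : ∃ n, m = n + 1 := ⟨m - 1, by omega⟩
  have hn : (n + 1) - 1 = n := rfl
  rw [hn]
  have hkn : 2 * k ≤ n := by
    rw [hn] at hk
    omega
  have hSph : (Sph n k : ℤ) = 2 ^ k * ((n.choose k : ℤ)) := by
    rw [Sph_formula]; push_cast; ring
  have hZ : ∀ (u : ZMod 3) (v : V (n+1)), (cwWeight (gbar (m := n+1) k) u v : ℤ)
      = 3^(n+1) - Zc (n+1) k u v := by
    intro u v
    have h := congrArg (Nat.cast (R := ℤ)) (cwWeight_add_Z (n+1) k u v)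
    push_cast at h
    linarith
  have hmain : ∀ (u : ZMod 3) (v : V (n+1)), u ≠ 0 → v ≠ 0 →
      (Zc (n+1) k u v : ℤ) = Dv v (-u) k + 3^n := by
    intro u v hu hv
    have h := congrArg (Nat.cast (R := ℤ)) (Z_main (n+1) k hu v)
    have hf := congrArg (Nat.cast (R := ℤ)) (Fb_eq v hv (-u))
    push_cast at h hf
    unfold Dv
    linarith
  constructor
  · rintro u v ⟨x, hx0, hexpr⟩
    by_cases hu : u = 0
    · subst hu
      by_cases hv : v = 0
      · exfalso
        apply hexpr
        subst hv
        simp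
      · rw [hZ, Z_u0, Fb_eq v hv]
        have hpos : (0:ℤ) ≤ 2 ^ k * (n.choose k : ℤ) := by positivity
        push_cast
        linarith
    · by_cases hv : v = 0
      · subst hv
        rw [hZ, Z_v0 _ _ hu]
        obtain ⟨j, rfl⟩ : ∃ j, k = j + 1 := ⟨k - 1, by omega⟩
        have hB : Ball (n+1) (j+1) = 3 * Ball n j + Sph n (j+1) := by
          rw [Ball_succ_n, Ball_succ_k]; ring
        have hle : 3 * Ball n j ≤ 3^n := Ball_le (by omega)
        rw [hB]
        push_cast
        linarith [hSph]
      · have hb := Dv_bound v hv (-u) (neg_ne_zero.mpr hu) k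
        have hDle : Dv v (-u) k ≤ (Sph n k : ℤ) := le_trans (le_abs_self _) hb
        rw [hZ, hmain u v hu hv]
        push_cast
        linarith [hSph]
  · intro u v hu hwv
    have hv : v ≠ 0 := by
      intro h; rw [h, hammingNorm_zero] at hwv; omega
    have hD := Dv_wt_one v hwv (neg_ne_zero.mpr hu) k
    rw [hZ, hmain u v hu hv, hD]
    push_cast
    linarith [hSph]
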